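/- Let (V,d) be a finite metric space and let F, F* ⊆ V be nonempty sets with |F| = |F*| = k. Suppose F is single-swap locally optimal for the k-median objective, i.e., for every r ∈ F and every f' ∈ V we have kmed((F \ {r}) ∪ {f'}) ≥ kmed(F). Then kmed(F) ≤ 5 · kmed(F*). -/

import Mathlib

open Finset

/-- Distance from a client `j` to a nonempty facility set `F`: `min_{f ∈ F} d(j,f)`. -/
noncomputable def distSet {V : Type*} [MetricSpace V] (j : V) (F : Finset V)
    (hF : F.Nonempty) : ℝ :=
  F.inf' hF fun f => dist j f

/-- The k-median cost of a nonempty facility set `F`: `∑_{j ∈ V} d(j,F)`. -/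
noncomputable def kmed {V : Type*} [MetricSpace V] [Fintype V] (F : Finset V)
    (hF : F.Nonempty) : ℝ :=
  ∑ j : V, distSet j F hF

/-- If `F` is single-swap locally optimal for the k-median objective, then
`kmed(F) ≤ 5 · kmed(F*)` for any `F*` of the same cardinality. -/
theorem kmed_single_swap_local_opt {V : Type*} [MetricSpace V] [Fintype V] [DecidableEq V]
    (k : ℕ) (F Fstar : Finset V) (hF : F.Nonempty) (hFstar : Fstar.Nonempty)
    (hcardF : F.card = k) (hcardFstar : Fstar.card = k)
    (hlocal : ∀ r ∈ F, ∀ f' : V,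
      kmed (insert f' (F.erase r)) (insert_nonempty _ _) ≥ kmed F hF) :
    kmed F hF ≤ 5 * kmed Fstar hFstar := by
  classical
  -- nearest facility in F
  have hs : ∀ j : V, ∃ f, f ∈ F ∧ distSet j F hF = dist j f := fun j =>
    F.exists_mem_eq_inf' hF (fun f => dist j f)
  choose s hsF hsd using hs
  -- nearest facility in Fstar
  have ht : ∀ j : V, ∃ f, f ∈ Fstar ∧ distSet j Fstar hFstar = dist j f := fun j =>
    Fstar.exists_mem_eq_inf' hFstar (fun f => dist j f)
  choose t htF htd using ht
  set O : V → ℝ := fun j => dist j (t j) with hO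
  set Sc : V → ℝ := fun j => dist j (s j) with hSc
  have hOnn : ∀ j, 0 ≤ O j := fun j => dist_nonneg
  have hScnn : ∀ j, 0 ≤ Sc j := fun j => dist_nonneg
  have hsle : ∀ j : V, ∀ f ∈ F, dist j (s j) ≤ dist j f := by
    intro j f hf
    rw [← hsd j]
    exact Finset.inf'_le _ hf
  -- key triangle bound
  have hkey : ∀ j : V, dist j (s (t j)) ≤ 2 * O j + Sc j := by
    intro j
    have h1 : dist j (s (t j)) ≤ dist j (t j) + dist (t j) (s (t j)) := dist_triangle _ _ _
    have h2 : dist (t j) (s (t j)) ≤ dist (t j) (s j) := hsle (t j) (s j) (hsF j)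
    have h3 : dist (t j) (s j) ≤ dist (t j) j + dist j (s j) := dist_triangle _ _ _
    have h4 : dist (t j) j = dist j (t j) := dist_comm _ _
    simp only [hO, hSc]
    linarith
  -- fiber counts
  set c : V → ℕ := fun f => (Fstar.filter (fun x => s x = f)).card with hc
  set S : Finset V := Fstar.filter (fun x => 2 ≤ c (s x)) with hSdef
  set F0 : Finset V := F.filter (fun f => c f = 0) with hF0
  set F1 : Finset V := F.filter (fun f => c f = 1) with hF1
  set F2 : Finset V := F.filter (fun f => 2 ≤ c f) with hF2
  have hmemc : ∀ x ∈ Fstar, 1 ≤ c (s x) := by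
    intro x hx
    have : x ∈ Fstar.filter (fun y => s y = x → False) ∨ True := Or.inr trivial
    have hxmem : x ∈ Fstar.filter (fun y => s y = s x) := by
      simp [Finset.mem_filter, hx]
    exact Finset.card_pos.2 ⟨x, hxmem⟩
  -- total count
  have hsum : ∑ f ∈ F, c f = Fstar.card :=
    (Finset.card_eq_sum_card_fiberwise (fun x hx => hsF x)).symm
  -- S.card = ∑ over F2 fibers
  have hScard : S.card = ∑ f ∈ F2, c f := by
    have := Finset.card_eq_sum_card_fiberwise (s := S) (t := F2) (f := s) ?_
    · rw [this]
      apply Finset.sum_congr rfl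
      intro f hf
      have hf2 : 2 ≤ c f := (Finset.mem_filter.1 hf).2
      congr 1
      ext x
      simp only [Finset.mem_filter, hSdef]
      constructor
      · rintro ⟨⟨hx, _⟩, hsx⟩; exact ⟨hx, hsx⟩
      · rintro ⟨hx, hsx⟩; exact ⟨⟨hx, by rw [hsx]; exact hf2⟩, hsx⟩
    · intro x hx
      obtain ⟨hx1, hx2⟩ := Finset.mem_filter.1 hx
      exact Finset.mem_filter.2 ⟨hsF x, hx2⟩
  have hS2 : 2 * F2.card ≤ S.card := by
    rw [hScard]
    calc 2 * F2.card = ∑ _f ∈ F2, 2 := by rw [Finset.sum_const, smul_eq_mul, mul_comm]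
    _ ≤ ∑ f ∈ F2, c f := Finset.sum_le_sum (fun f hf => (Finset.mem_filter.1 hf).2)
  -- partition cardinalities
  have hsplit : ∀ (g : V → ℕ), ∑ f ∈ F, g f = ∑ f ∈ F0, g f + ∑ f ∈ F1, g f + ∑ f ∈ F2, g f := by
    intro g
    rw [← Finset.sum_filter_add_sum_filter_not F (fun f => c f = 0) g]
    have h2 : ∑ f ∈ F.filter (fun f => ¬ c f = 0), g f
        = ∑ f ∈ F1, g f + ∑ f ∈ F2, g f := by
      rw [← Finset.sum_filter_add_sum_filter_not (F.filter (fun f => ¬ c f = 0))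
        (fun f => c f = 1) g, Finset.filter_filter, Finset.filter_filter]
      congr 1
      · apply Finset.sum_congr _ (fun _ _ => rfl)
        apply Finset.filter_congr
        intro f _
        omega
      · apply Finset.sum_congr _ (fun _ _ => rfl)
        apply Finset.filter_congr
        intro f _
        omega
    rw [h2, add_assoc]
  have hcard3 : F.card = F0.card + F1.card + F2.card := by
    have := hsplit (fun _ => 1)
    simpa using this
  have hF1sum : ∑ f ∈ F1, c f = F1.card := by
    rw [Finset.sum_congr rfl (fun f hf => (Finset.mem_filter.1 hf).2)]
    simp
    rfl
  have hSF0 : S.card ≤ 2 * F0.card := by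
    have h1 := hsplit c
    have h2 : ∑ f ∈ F0, c f = 0 := by
      apply Finset.sum_eq_zero
      intro f hf
      exact (Finset.mem_filter.1 hf).2
    rw [hsum, h2, hF1sum, ← hScard] at h1
    omega
  -- the assignment ρ
  have hcardS : Fintype.card {x // x ∈ S} ≤ Fintype.card ({x // x ∈ F0} × Fin 2) := by
    rw [Fintype.card_prod, Fintype.card_coe, Fintype.card_coe, Fintype.card_fin]
    omega
  obtain ⟨e⟩ := Function.Embedding.nonempty_of_card_le hcardS
  set ρ : V → V := fun x => if h : x ∈ S then ((e ⟨x, h⟩).1 : V) else s x with hρ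
  have hρF : ∀ x ∈ Fstar, ρ x ∈ F := by
    intro x hx
    by_cases h : x ∈ S
    · simp only [hρ, dif_pos h]
      exact Finset.filter_subset _ _ (e ⟨x, h⟩).1.2
    · simp only [hρ, dif_neg h]
      exact hsF x
  have hρF0 : ∀ x, (h : x ∈ S) → c (ρ x) = 0 := by
    intro x h
    simp only [hρ, dif_pos h]
    exact (Finset.mem_filter.1 (e ⟨x, h⟩).1.2).2
  have hρP : ∀ x ∈ Fstar, ∀ y ∈ Fstar, s y = ρ x → y = x := by
    intro x hx y hy hsy
    by_cases h : x ∈ S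
    · exfalso
      have h0 : c (ρ x) = 0 := hρF0 x h
      have : y ∈ Fstar.filter (fun z => s z = ρ x) := Finset.mem_filter.2 ⟨hy, hsy⟩
      have := Finset.card_pos.2 ⟨y, this⟩
      simp only [hc] at h0
      omega
    · have hρx : ρ x = s x := by simp only [hρ, dif_neg h]
      have hle1 : c (s x) ≤ 1 := by
        have : ¬ 2 ≤ c (s x) := fun hcc => h (Finset.mem_filter.2 ⟨hx, hcc⟩)
        omega
      have hy' : y ∈ Fstar.filter (fun z => s z = s x) :=
        Finset.mem_filter.2 ⟨hy, by rw [hsy, hρx]⟩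
      have hx' : x ∈ Fstar.filter (fun z => s z = s x) := Finset.mem_filter.2 ⟨hx, rfl⟩
      exact Finset.card_le_one.1 hle1 y hy' x hx'
  -- fibers of ρ have size ≤ 2
  have hρ2 : ∀ v : V, (Fstar.filter (fun x => ρ x = v)).card ≤ 2 := by
    intro v
    set A := Fstar.filter (fun x => ρ x = v) with hA
    by_cases hAS : ∃ x ∈ A, x ∈ S
    · -- then v ∈ F0, so every element of A is in S
      obtain ⟨x0, hx0A, hx0S⟩ := hAS
      have hv0 : c v = 0 := by
        have := hρF0 x0 hx0S
        rwa [(Finset.mem_filter.1 hx0A).2] at this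
      have hAsubS : ∀ x ∈ A, x ∈ S := by
        intro x hxA
        by_contra hxS
        obtain ⟨hxF, hxv⟩ := Finset.mem_filter.1 hxA
        have : ρ x = s x := by simp only [hρ, dif_neg hxS]
        have hsxv : s x = v := by rw [← this, hxv]
        have : x ∈ Fstar.filter (fun z => s z = v) := Finset.mem_filter.2 ⟨hxF, hsxv⟩
        have := Finset.card_pos.2 ⟨x, this⟩
        simp only [hc] at hv0
        omega
      -- injection into Fin 2 via second component of e
      have : A.card ≤ (Finset.univ : Finset (Fin 2)).card := by
        apply Finset.card_le_card_of_injOn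
          (fun x => if h : x ∈ S then (e ⟨x, h⟩).2 else 0)
        · intro x _; exact Finset.mem_univ _
        · intro x hxA y hyA hxy
          have hxS := hAsubS x hxA
          have hyS := hAsubS y hyA
          simp only [dif_pos hxS, dif_pos hyS] at hxy
          have hfst : (e ⟨x, hxS⟩).1 = (e ⟨y, hyS⟩).1 := by
            have hx1 : ((e ⟨x, hxS⟩).1 : V) = v := by
              have := (Finset.mem_filter.1 hxA).2
              simpa only [hρ, dif_pos hxS] using this
            have hy1 : ((e ⟨y, hyS⟩).1 : V) = v := by
              have := (Finset.mem_filter.1 hyA).2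
              simpa only [hρ, dif_pos hyS] using this
            exact Subtype.ext (hx1.trans hy1.symm)
          have : e ⟨x, hxS⟩ = e ⟨y, hyS⟩ := Prod.ext hfst hxy
          have := e.injective this
          exact congrArg Subtype.val this
      simpa using this
    · -- all elements of A avoid S, so A has at most one element
      push_neg at hAS
      have : A.card ≤ 1 := by
        apply Finset.card_le_one.2
        intro x hxA y hyA
        obtain ⟨hxF, hxv⟩ := Finset.mem_filter.1 hxA
        obtain ⟨hyF, hyv⟩ := Finset.mem_filter.1 hyA
        have hsy : s y = ρ y := by simp only [hρ, dif_neg (hAS y hyA)]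
        exact (hρP x hxF y hyF (by rw [hsy, hyv, hxv])).symm
      omega
  -- per-swap, per-client bound
  set g : V → V → ℝ := fun f j =>
    if t j = f then O j else if ρ f = s j then 2 * O j + Sc j else Sc j with hg
  have hswap : ∀ fx ∈ Fstar, kmed F hF ≤ ∑ j : V, g fx j := by
    intro fx hfx
    have h1 : kmed F hF ≤ kmed (insert fx (F.erase (ρ fx))) (insert_nonempty _ _) :=
      hlocal (ρ fx) (hρF fx hfx) fx
    refine h1.trans ?_
    unfold kmed
    apply Finset.sum_le_sum
    intro j _
    set F' := insert fx (F.erase (ρ fx)) with hF'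
    by_cases h1 : t j = fx
    · rw [hg]
      simp only [if_pos h1]
      have hOj : O j = dist j fx := by rw [hO]; simp only; rw [h1]
      rw [hOj]
      exact Finset.inf'_le _ (Finset.mem_insert_self _ _)
    · by_cases h2 : ρ fx = s j
      · -- reroute to s (t j)
        have hne : s (t j) ≠ ρ fx := by
          intro hEq
          exact h1 (hρP fx hfx (t j) (htF j) hEq)
        have hmem : s (t j) ∈ F' := by
          apply Finset.mem_insert_of_mem
          exact Finset.mem_erase.2 ⟨hne, hsF (t j)⟩
        have hb : distSet j F' (insert_nonempty _ _) ≤ dist j (s (t j)) :=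
          Finset.inf'_le _ hmem
        rw [hg]
        simp only [if_neg h1, if_pos h2]
        exact hb.trans (hkey j)
      · have hne : s j ≠ ρ fx := fun hEq => h2 hEq.symm
        have hmem : s j ∈ F' := by
          apply Finset.mem_insert_of_mem
          exact Finset.mem_erase.2 ⟨hne, hsF j⟩
        have hb : distSet j F' (insert_nonempty _ _) ≤ dist j (s j) :=
          Finset.inf'_le _ hmem
        rw [hg]
        simp only [if_neg h1, if_neg h2]
        exact hb
  -- k ≥ 1
  have hk1 : 1 ≤ k := by
    rw [← hcardF]
    exact Finset.card_pos.2 hF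
  -- per-client total bound
  have hperj : ∀ j : V, ∑ fx ∈ Fstar, g fx j ≤ 5 * O j + ((k - 1 : ℕ) : ℝ) * Sc j := by
    intro j
    rw [← Finset.add_sum_erase _ _ (htF j)]
    have hgt : g (t j) j = O j := by rw [hg]; simp
    rw [hgt]
    have hbound : ∑ fx ∈ Fstar.erase (t j), g fx j
        ≤ ∑ fx ∈ Fstar.erase (t j), (Sc j + if ρ fx = s j then 2 * O j else 0) := by
      apply Finset.sum_le_sum
      intro fx hfx
      have hne : t j ≠ fx := fun hEq => (Finset.mem_erase.1 hfx).1 hEq.symm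
      rw [hg]
      simp only [if_neg hne]
      by_cases h2 : ρ fx = s j
      · simp [h2]; linarith [hOnn j, hScnn j]
      · simp [h2]
    have hcount : ∑ fx ∈ Fstar.erase (t j), (if ρ fx = s j then (2 * O j) else 0)
        ≤ 4 * O j := by
      rw [← Finset.sum_filter]
      rw [Finset.sum_const, nsmul_eq_mul]
      have hc2 : ((Fstar.erase (t j)).filter (fun fx => ρ fx = s j)).card ≤ 2 := by
        calc ((Fstar.erase (t j)).filter (fun fx => ρ fx = s j)).card
            ≤ (Fstar.filter (fun fx => ρ fx = s j)).card :=
              Finset.card_le_card (Finset.filter_subset_filter _ (Finset.erase_subset _ _))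
          _ ≤ 2 := hρ2 (s j)
      calc (((Fstar.erase (t j)).filter (fun fx => ρ fx = s j)).card : ℝ) * (2 * O j)
          ≤ 2 * (2 * O j) := by
            apply mul_le_mul_of_nonneg_right _ (by linarith [hOnn j])
            exact_mod_cast hc2
        _ = 4 * O j := by ring
    have hcard_erase : (Fstar.erase (t j)).card = k - 1 := by
      rw [Finset.card_erase_of_mem (htF j), hcardFstar]
    have hsum2 : ∑ fx ∈ Fstar.erase (t j), (Sc j + if ρ fx = s j then 2 * O j else 0)
        = ((k - 1 : ℕ) : ℝ) * Sc j
          + ∑ fx ∈ Fstar.erase (t j), (if ρ fx = s j then 2 * O j else 0) := by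
      rw [Finset.sum_add_distrib, Finset.sum_const, hcard_erase, nsmul_eq_mul]
    have := hbound.trans (le_of_eq hsum2)
    linarith [hcount, this]
  -- combine everything
  have htotal : (k : ℝ) * kmed F hF ≤ ∑ j : V, (5 * O j + ((k - 1 : ℕ) : ℝ) * Sc j) := by
    have h1 : (k : ℝ) * kmed F hF = ∑ fx ∈ Fstar, kmed F hF := by
      rw [Finset.sum_const, hcardFstar, nsmul_eq_mul]
    rw [h1]
    calc ∑ fx ∈ Fstar, kmed F hF ≤ ∑ fx ∈ Fstar, ∑ j : V, g fx j :=
          Finset.sum_le_sum (fun fx hfx => hswap fx hfx)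
      _ = ∑ j : V, ∑ fx ∈ Fstar, g fx j := Finset.sum_comm
      _ ≤ ∑ j : V, (5 * O j + ((k - 1 : ℕ) : ℝ) * Sc j) :=
          Finset.sum_le_sum (fun j _ => hperj j)
  have hCstar : kmed Fstar hFstar = ∑ j : V, O j := by
    unfold kmed
    exact Finset.sum_congr rfl (fun j _ => htd j)
  have hC : kmed F hF = ∑ j : V, Sc j := by
    unfold kmed
    exact Finset.sum_congr rfl (fun j _ => hsd j)
  have hfinal : (k : ℝ) * kmed F hF
      ≤ 5 * kmed Fstar hFstar + ((k - 1 : ℕ) : ℝ) * kmed F hF := by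
    have hsplit2 : ∑ j : V, (5 * O j + ((k - 1 : ℕ) : ℝ) * Sc j)
        = 5 * ∑ j : V, O j + ((k - 1 : ℕ) : ℝ) * ∑ j : V, Sc j := by
      rw [Finset.sum_add_distrib, Finset.mul_sum, Finset.mul_sum]
    rw [hC] at htotal ⊢
    rw [hCstar]
    exact htotal.trans (le_of_eq hsplit2)
  have hcast : ((k - 1 : ℕ) : ℝ) = (k : ℝ) - 1 := by
    rw [Nat.cast_sub hk1, Nat.cast_one]
  rw [hcast] at hfinal
  nlinarith [hfinal]
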